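/- For every integer n ≥ 2 and every α ∈ ℂ with α ≠ −1/4, the (n+1)-dimensional n-ary Filippov algebra C₂(α) does not degenerate to C₃; that is, the structure of C₃ does not lie in the closure of the GL(V)-orbit of the structure of C₂(α). -/

import Mathlib

open Function Submodule

/-! Common framework: `V = ℂ^{n+1}`, `n`-ary multiplications as functions
`(Fin n → V) → V`, the action of `GL(V)` on them, orbits, and the
(n+1)-dimensional n-ary Filippov algebras of Kaygorodov–Volkov, each described
as an alternating `n`-linear map by its values on the increasing tuples of
distinct standard basis vectors (0-indexed: `bt n j` is the tuple omitting `e j`). -/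

/-- The underlying space `V = ℂ^{n+1}`. -/
abbrev nV (n : ℕ) : Type := Fin (n + 1) → ℂ

/-- The `j`-th standard basis vector of `V` (0-indexed). -/
def sb (n : ℕ) (j : Fin (n + 1)) : nV n := Pi.single j 1

/-- The increasing `n`-tuple of standard basis vectors omitting `e j`. -/
def bt (n : ℕ) (j : Fin (n + 1)) : Fin n → nV n := fun k => sb n (j.succAbove k)

/-- The action of `GL(V)` (invertible linear maps) on `n`-ary multiplications:
`(g • μ)(x₁, …, xₙ) = g (μ (g⁻¹ x₁, …, g⁻¹ xₙ))`. -/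
noncomputable def glAct (n : ℕ) (g : nV n ≃ₗ[ℂ] nV n) (μ : (Fin n → nV n) → nV n) :
    (Fin n → nV n) → nV n :=
  fun x => g (μ fun i => g.symm (x i))

/-- The `GL(V)`-orbit of an `n`-ary multiplication. -/
def glOrbit (n : ℕ) (μ : (Fin n → nV n) → nV n) : Set ((Fin n → nV n) → nV n) :=
  {ν | ∃ g : nV n ≃ₗ[ℂ] nV n, ν = glAct n g μ}

/-- The algebra `B`: `[e₂, …, e_{n+1}] = e₁` (0-indexed: the tuple omitting `e 0`
maps to `e 0`), all other increasing basis products zero. -/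
def IsB (n : ℕ) (μ : AlternatingMap ℂ (nV n) (nV n) (Fin n)) : Prop :=
  μ (bt n 0) = sb n 0 ∧ ∀ j : Fin (n + 1), j ≠ 0 → μ (bt n j) = 0

/-- The algebra `C₁`: `[e₂, …, e_{n+1}] = e₁`, `[e₁, e₃, …, e_{n+1}] = e₂`. -/
def IsC1 (n : ℕ) (μ : AlternatingMap ℂ (nV n) (nV n) (Fin n)) : Prop :=
  μ (bt n 0) = sb n 0 ∧ μ (bt n 1) = sb n 1 ∧
    ∀ j : Fin (n + 1), j ≠ 0 → j ≠ 1 → μ (bt n j) = 0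

/-- The algebra `C₂(α)`: `[e₂, …, e_{n+1}] = α e₁ + e₂`, `[e₁, e₃, …, e_{n+1}] = e₂`. -/
def IsC2 (n : ℕ) (α : ℂ) (μ : AlternatingMap ℂ (nV n) (nV n) (Fin n)) : Prop :=
  μ (bt n 0) = α • sb n 0 + sb n 1 ∧ μ (bt n 1) = sb n 1 ∧
    ∀ j : Fin (n + 1), j ≠ 0 → j ≠ 1 → μ (bt n j) = 0

/-- The algebra `C₃`: `[e₁, e₃, …, e_{n+1}] = e₁`, `[e₂, e₃, …, e_{n+1}] = e₂`. -/
def IsC3 (n : ℕ) (μ : AlternatingMap ℂ (nV n) (nV n) (Fin n)) : Prop :=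
  μ (bt n 1) = sb n 0 ∧ μ (bt n 0) = sb n 1 ∧
    ∀ j : Fin (n + 1), j ≠ 0 → j ≠ 1 → μ (bt n j) = 0

/-- The algebra `D_r`: `[e₁, …, e_{i-1}, e_{i+1}, …, e_{n+1}] = e_i` for `1 ≤ i ≤ r`
(0-indexed: the tuple omitting `e j` maps to `e j` for `j < r` and to `0` otherwise). -/
def IsD (n r : ℕ) (μ : AlternatingMap ℂ (nV n) (nV n) (Fin n)) : Prop :=
  ∀ j : Fin (n + 1), ((j : ℕ) < r → μ (bt n j) = sb n j) ∧ (r ≤ (j : ℕ) → μ (bt n j) = 0)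

section Aux
open Matrix

open Matrix

variable {n : ℕ}

noncomputable def detm (n : ℕ) (j : Fin (n + 1)) : AlternatingMap ℂ (nV n) ℂ (Fin n) :=
  (Matrix.detRowAlternating : (Fin n → ℂ) [⋀^Fin n]→ₗ[ℂ] ℂ).compLinearMap
    (LinearMap.funLeft ℂ ℂ j.succAbove)

lemma detm_apply (j : Fin (n + 1)) (x : Fin n → nV n) :
    detm n j x = Matrix.det (Matrix.of fun i k => x i (j.succAbove k)) := rfl

lemma sb_apply (j k : Fin (n + 1)) : sb n j k = if k = j then 1 else 0 := Pi.single_apply j 1 k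

lemma detm_bt_self (j : Fin (n + 1)) : detm n j (bt n j) = 1 := by
  rw [detm_apply]
  have h : (Matrix.of fun i k => bt n j i (j.succAbove k)) = (1 : Matrix (Fin n) (Fin n) ℂ) := by
    ext i k
    simp only [Matrix.of_apply, bt, sb_apply, Matrix.one_apply]
    by_cases h : i = k
    · simp [h]
    · rw [if_neg, if_neg h]
      exact fun hc => h ((Fin.succAbove_right_injective (p := j)) hc).symm
  rw [h, Matrix.det_one]

lemma detm_bt_ne {j j' : Fin (n + 1)} (h : j' ≠ j) : detm n j' (bt n j) = 0 := by
  rw [detm_apply]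
  obtain ⟨i₀, hi₀⟩ := Fin.exists_succAbove_eq h
  apply Matrix.det_eq_zero_of_row_eq_zero i₀
  intro k
  simp only [Matrix.of_apply, bt, hi₀, sb_apply]
  exact if_neg (Fin.succAbove_ne j' k)

lemma alternating_ext {f g : AlternatingMap ℂ (nV n) (nV n) (Fin n)}
    (h : ∀ j, f (bt n j) = g (bt n j)) : f = g := by
  apply Module.Basis.ext_alternating (Pi.basisFun ℂ (Fin (n + 1)))
  intro v hv
  have hb : ∀ i, (Pi.basisFun ℂ (Fin (n + 1))) (v i) = sb n (v i) := by
    intro i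
    funext k
    simp [sb, Pi.basisFun_apply, Pi.single_apply, Function.update,
      eq_comm]
  have hns : ∃ j : Fin (n + 1), ∀ i, v i ≠ j := by
    by_contra h'
    push_neg at h'
    have hs : Function.Surjective v := fun j => h' j
    have := Fintype.card_le_of_surjective v hs
    simp at this
  obtain ⟨j, hj⟩ := hns
  choose u hu using fun k => Fin.exists_succAbove_eq (hj k)
  have hui : Function.Injective u := fun a b hab => hv (by rw [← hu a, ← hu b, hab])
  have hub : Function.Bijective u := Finite.injective_iff_bijective.mp hui
  let σ : Equiv.Perm (Fin n) := Equiv.ofBijective u hub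
  have hcomp : (fun i => sb n (v i)) = (bt n j) ∘ σ := by
    funext k
    simp only [Function.comp_apply, bt]
    rw [show σ k = u k from rfl, hu]
  simp only [hb]
  rw [hcomp, AlternatingMap.map_perm, AlternatingMap.map_perm, h j]

end Aux

section Aux2

variable {m : ℕ}

noncomputable def Lmap (m : ℕ) (μ : AlternatingMap ℂ (nV (m + 2)) (nV (m + 2)) (Fin (m + 2)))
    (y : Fin (m + 2) → nV (m + 2)) : nV (m + 2) →ₗ[ℂ] nV (m + 2) where
  toFun x := μ (Function.update y 0 x)
  map_add' a b := by rw [AlternatingMap.map_update_add]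
  map_smul' c a := by rw [AlternatingMap.map_update_smul]; rfl

lemma Lmap_apply (μ : AlternatingMap ℂ (nV (m + 2)) (nV (m + 2)) (Fin (m + 2)))
    (y : Fin (m + 2) → nV (m + 2)) (x : nV (m + 2)) :
    Lmap m μ y x = μ (Function.update y 0 x) := rfl

noncomputable def T1 (m : ℕ) (f : (Fin (m + 2) → nV (m + 2)) → nV (m + 2))
    (y : Fin (m + 2) → nV (m + 2)) : ℂ :=
  ∑ j, f (Function.update y 0 (sb (m + 2) j)) j

noncomputable def T2 (m : ℕ) (f : (Fin (m + 2) → nV (m + 2)) → nV (m + 2))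
    (y z : Fin (m + 2) → nV (m + 2)) : ℂ :=
  ∑ j, ∑ i, f (Function.update z 0 (sb (m + 2) j)) i * f (Function.update y 0 (sb (m + 2) i)) j

lemma pi_expand {N : ℕ} (x : Fin N → ℂ) : x = ∑ i, x i • (Pi.single i 1 : Fin N → ℂ) := by
  funext k
  rw [Finset.sum_apply]
  simp [Pi.single_apply]

lemma trace_eq {N : ℕ} (f : (Fin N → ℂ) →ₗ[ℂ] (Fin N → ℂ)) :
    LinearMap.trace ℂ _ f = ∑ j, f (Pi.single j 1) j := by
  rw [LinearMap.trace_eq_matrix_trace ℂ (Pi.basisFun ℂ (Fin N))]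
  simp [Matrix.trace, LinearMap.toMatrix_apply]

lemma trace_comp {N : ℕ} (A B : (Fin N → ℂ) →ₗ[ℂ] (Fin N → ℂ)) :
    LinearMap.trace ℂ _ (A ∘ₗ B) = ∑ j, ∑ i, B (Pi.single j 1) i * A (Pi.single i 1) j := by
  rw [trace_eq]
  refine Finset.sum_congr rfl fun j _ => ?_
  have hAB : A (B (Pi.single j 1)) = ∑ i, B (Pi.single j 1) i • A (Pi.single i 1) := by
    conv_lhs => rw [pi_expand (B (Pi.single j 1))]
    rw [map_sum]
    simp_rw [map_smul]
  rw [LinearMap.comp_apply, hAB, Finset.sum_apply]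
  exact Finset.sum_congr rfl fun i _ => rfl

lemma glAct_update (g : nV (m + 2) ≃ₗ[ℂ] nV (m + 2))
    (μ : AlternatingMap ℂ (nV (m + 2)) (nV (m + 2)) (Fin (m + 2)))
    (y : Fin (m + 2) → nV (m + 2)) (v : nV (m + 2)) :
    glAct (m + 2) g ⇑μ (Function.update y 0 v) =
      (LinearEquiv.conj g (Lmap m μ (fun i => g.symm (y i)))) v := by
  simp only [glAct, LinearEquiv.conj_apply_apply, Lmap_apply]
  congr 1
  congr 1
  funext i
  by_cases hi : i = 0
  · subst hi; simp
  · simp [Function.update_of_ne hi]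

lemma T1_glAct (g : nV (m + 2) ≃ₗ[ℂ] nV (m + 2))
    (μ : AlternatingMap ℂ (nV (m + 2)) (nV (m + 2)) (Fin (m + 2)))
    (y : Fin (m + 2) → nV (m + 2)) :
    T1 m (glAct (m + 2) g ⇑μ) y = T1 m ⇑μ (fun i => g.symm (y i)) := by
  have h1 : T1 m (glAct (m + 2) g ⇑μ) y
      = LinearMap.trace ℂ _ (LinearEquiv.conj g (Lmap m μ (fun i => g.symm (y i)))) := by
    rw [trace_eq]
    exact Finset.sum_congr rfl fun j _ => by rw [show sb (m+2) j = Pi.single j 1 from rfl, glAct_update]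
  rw [h1, LinearMap.trace_conj', trace_eq]
  rfl

lemma T2_glAct (g : nV (m + 2) ≃ₗ[ℂ] nV (m + 2))
    (μ : AlternatingMap ℂ (nV (m + 2)) (nV (m + 2)) (Fin (m + 2)))
    (y z : Fin (m + 2) → nV (m + 2)) :
    T2 m (glAct (m + 2) g ⇑μ) y z = T2 m ⇑μ (fun i => g.symm (y i)) (fun i => g.symm (z i)) := by
  have h1 : T2 m (glAct (m + 2) g ⇑μ) y z
      = LinearMap.trace ℂ _ ((LinearEquiv.conj g (Lmap m μ (fun i => g.symm (y i)))) ∘ₗ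
          (LinearEquiv.conj g (Lmap m μ (fun i => g.symm (z i))))) := by
    rw [trace_comp]
    exact Finset.sum_congr rfl fun j _ => Finset.sum_congr rfl fun i _ => by
      rw [show sb (m+2) j = Pi.single j 1 from rfl, show sb (m+2) i = Pi.single i 1 from rfl,
        glAct_update, glAct_update]
  rw [h1, ← LinearEquiv.conj_comp, LinearMap.trace_conj', trace_comp]
  rfl

end Aux2

section Aux3
variable {m : ℕ} {α : ℂ}

lemma detm_u00 (y : Fin (m + 2) → nV (m + 2)) :
    detm (m + 2) 0 (Function.update y 0 (sb (m + 2) 0)) = 0 := by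
  rw [detm_apply]
  apply Matrix.det_eq_zero_of_row_eq_zero 0
  intro k
  simp [sb_apply, Fin.succ_ne_zero]

lemma detm_u11 (y : Fin (m + 2) → nV (m + 2)) :
    detm (m + 2) 1 (Function.update y 0 (sb (m + 2) 1)) = 0 := by
  rw [detm_apply]
  apply Matrix.det_eq_zero_of_row_eq_zero 0
  intro k
  simp only [Matrix.of_apply, Function.update_self, sb_apply]
  exact if_neg (Fin.succAbove_ne 1 k)

lemma succAbove_one_succ (k : Fin (m + 1)) :
    (1 : Fin (m + 3)).succAbove k.succ = k.succ.succ := by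
  apply Fin.succAbove_of_lt_succ
  rw [Fin.lt_iff_val_lt_val]
  simp [Fin.val_succ]

lemma succAbove_one_zero : (1 : Fin (m + 3)).succAbove 0 = 0 := by
  apply Fin.succAbove_of_castSucc_lt
  simp [Fin.lt_iff_val_lt_val]

lemma detm_swap (y : Fin (m + 2) → nV (m + 2)) :
    detm (m + 2) 1 (Function.update y 0 (sb (m + 2) 0)) =
      detm (m + 2) 0 (Function.update y 0 (sb (m + 2) 1)) := by
  rw [detm_apply, detm_apply, Matrix.det_succ_row_zero, Matrix.det_succ_row_zero]
  have h1 : ∀ j : Fin (m + 2), (Matrix.of fun i k =>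
      Function.update y 0 (sb (m + 2) 0) i ((1 : Fin (m + 3)).succAbove k)) 0 j
        = if j = 0 then 1 else 0 := by
    intro j
    rcases Fin.eq_zero_or_eq_succ j with rfl | ⟨k, rfl⟩
    · simp [sb_apply, succAbove_one_zero]
    · rw [if_neg (Fin.succ_ne_zero k)]
      simp only [Matrix.of_apply, Function.update_self, sb_apply, succAbove_one_succ]
      exact if_neg (Fin.succ_ne_zero _)
  have h2 : ∀ j : Fin (m + 2), (Matrix.of fun i k =>
      Function.update y 0 (sb (m + 2) 1) i ((0 : Fin (m + 3)).succAbove k)) 0 j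
        = if j = 0 then 1 else 0 := by
    intro j
    rcases Fin.eq_zero_or_eq_succ j with rfl | ⟨k, rfl⟩
    · simp [sb_apply, Fin.succAbove_zero]
    · rw [if_neg (Fin.succ_ne_zero k)]
      simp only [Matrix.of_apply, Function.update_self, sb_apply, Fin.succAbove_zero]
      refine if_neg fun hc => ?_
      have h := Fin.succ_injective _ (hc.trans Fin.succ_zero_eq_one.symm)
      exact Fin.succ_ne_zero _ h
  simp_rw [h1, h2]
  rw [Finset.sum_eq_single 0, Finset.sum_eq_single 0]
  · simp only [if_pos rfl]
    have hsub : ((Matrix.of fun i k => Function.update y 0 (sb (m + 2) 0) i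
          ((1 : Fin (m + 3)).succAbove k)).submatrix Fin.succ ((0 : Fin (m + 2)).succAbove))
        = ((Matrix.of fun i k => Function.update y 0 (sb (m + 2) 1) i
          ((0 : Fin (m + 3)).succAbove k)).submatrix Fin.succ ((0 : Fin (m + 2)).succAbove)) := by
      ext i k
      simp only [Matrix.submatrix_apply, Matrix.of_apply, Fin.succAbove_zero,
        Function.update_of_ne (Fin.succ_ne_zero i), succAbove_one_succ]
    rw [hsub]
  · intro b _ hb
    rw [if_neg hb]
    ring
  · simp
  · intro b _ hb
    rw [if_neg hb]
    ring
  · simp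
end Aux3

section Aux4
variable {m : ℕ} {α : ℂ} {μ : AlternatingMap ℂ (nV (m + 2)) (nV (m + 2)) (Fin (m + 2))}

lemma C2_rep (hμ : IsC2 (m + 2) α μ) (x : Fin (m + 2) → nV (m + 2)) :
    μ x = detm (m + 2) 0 x • (α • sb (m + 2) 0 + sb (m + 2) 1)
      + detm (m + 2) 1 x • sb (m + 2) 1 := by
  have h : μ = (LinearMap.toSpanSingleton ℂ (nV (m + 2))
        (α • sb (m + 2) 0 + sb (m + 2) 1)).compAlternatingMap (detm (m + 2) 0)
      + (LinearMap.toSpanSingleton ℂ (nV (m + 2))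
        (sb (m + 2) 1)).compAlternatingMap (detm (m + 2) 1) := by
    apply alternating_ext
    intro j
    rw [AlternatingMap.add_apply, LinearMap.compAlternatingMap_apply,
      LinearMap.compAlternatingMap_apply, LinearMap.toSpanSingleton_apply,
      LinearMap.toSpanSingleton_apply]
    by_cases h0 : j = 0
    · subst h0
      rw [detm_bt_self, detm_bt_ne one_ne_zero, hμ.1, one_smul, zero_smul, add_zero]
    by_cases h1 : j = 1
    · subst h1
      rw [detm_bt_self, detm_bt_ne zero_ne_one, hμ.2.1, one_smul, zero_smul, zero_add]
    · rw [detm_bt_ne (Ne.symm h0), detm_bt_ne (Ne.symm h1),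
        hμ.2.2 j h0 h1, zero_smul, zero_smul, add_zero]
  rw [h]
  rw [AlternatingMap.add_apply, LinearMap.compAlternatingMap_apply,
    LinearMap.compAlternatingMap_apply, LinearMap.toSpanSingleton_apply,
    LinearMap.toSpanSingleton_apply]

lemma C2_comp (hμ : IsC2 (m + 2) α μ) (x : Fin (m + 2) → nV (m + 2)) (j : Fin (m + 3)) :
    μ x j = (α * detm (m + 2) 0 x) * (if j = 0 then 1 else 0)
      + (detm (m + 2) 0 x + detm (m + 2) 1 x) * (if j = 1 then 1 else 0) := by
  have h := congrFun (C2_rep hμ x) j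
  rw [h]
  simp only [Pi.add_apply, Pi.smul_apply, sb_apply, smul_eq_mul]
  ring

lemma sum_delta2 {N : ℕ} (f g : Fin (N + 3) → ℂ) :
    ∑ j, (f j * (if j = 0 then 1 else 0) + g j * (if j = 1 then 1 else 0)) = f 0 + g 1 := by
  rw [Finset.sum_add_distrib]
  simp only [mul_ite, mul_one, mul_zero]
  rw [Finset.sum_ite_eq' Finset.univ (0 : Fin (N + 3)) f,
    Finset.sum_ite_eq' Finset.univ (1 : Fin (N + 3)) g]
  simp

lemma C2_T1 (hμ : IsC2 (m + 2) α μ) (y : Fin (m + 2) → nV (m + 2)) :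
    T1 m ⇑μ y = detm (m + 2) 0 (Function.update y 0 (sb (m + 2) 1)) := by
  unfold T1
  rw [Finset.sum_congr rfl fun j _ => C2_comp hμ _ j, sum_delta2, detm_u00, detm_u11]
  ring

lemma C2_T2 (hμ : IsC2 (m + 2) α μ) (y z : Fin (m + 2) → nV (m + 2)) :
    T2 m ⇑μ y z = (1 + 2 * α) * (T1 m ⇑μ y * T1 m ⇑μ z) := by
  unfold T2
  have step1 : ∀ j : Fin (m + 3),
      ∑ i, μ (Function.update z 0 (sb (m + 2) j)) i * μ (Function.update y 0 (sb (m + 2) i)) j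
      = (α * detm (m + 2) 0 (Function.update z 0 (sb (m + 2) j)))
          * μ (Function.update y 0 (sb (m + 2) 0)) j
        + (detm (m + 2) 0 (Function.update z 0 (sb (m + 2) j))
            + detm (m + 2) 1 (Function.update z 0 (sb (m + 2) j)))
          * μ (Function.update y 0 (sb (m + 2) 1)) j := by
    intro j
    rw [Finset.sum_congr rfl fun i _ => show
        μ (Function.update z 0 (sb (m + 2) j)) i * μ (Function.update y 0 (sb (m + 2) i)) j
        = ((α * detm (m + 2) 0 (Function.update z 0 (sb (m + 2) j)))
            * μ (Function.update y 0 (sb (m + 2) i)) j) * (if i = 0 then 1 else 0)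
          + ((detm (m + 2) 0 (Function.update z 0 (sb (m + 2) j))
              + detm (m + 2) 1 (Function.update z 0 (sb (m + 2) j)))
            * μ (Function.update y 0 (sb (m + 2) i)) j) * (if i = 1 then 1 else 0) by
      rw [C2_comp hμ (Function.update z 0 (sb (m + 2) j)) i]; ring]
    rw [sum_delta2]
  rw [Finset.sum_congr rfl fun j _ => step1 j]
  rw [Finset.sum_congr rfl fun j _ => show
      (α * detm (m + 2) 0 (Function.update z 0 (sb (m + 2) j)))
          * μ (Function.update y 0 (sb (m + 2) 0)) j
        + (detm (m + 2) 0 (Function.update z 0 (sb (m + 2) j))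
            + detm (m + 2) 1 (Function.update z 0 (sb (m + 2) j)))
          * μ (Function.update y 0 (sb (m + 2) 1)) j
      = ((α * detm (m + 2) 0 (Function.update z 0 (sb (m + 2) j)))
            * (α * detm (m + 2) 0 (Function.update y 0 (sb (m + 2) 0)))
          + (detm (m + 2) 0 (Function.update z 0 (sb (m + 2) j))
              + detm (m + 2) 1 (Function.update z 0 (sb (m + 2) j)))
            * (α * detm (m + 2) 0 (Function.update y 0 (sb (m + 2) 1)))) * (if j = 0 then 1 else 0)
        + ((α * detm (m + 2) 0 (Function.update z 0 (sb (m + 2) j)))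
            * (detm (m + 2) 0 (Function.update y 0 (sb (m + 2) 0))
                + detm (m + 2) 1 (Function.update y 0 (sb (m + 2) 0)))
          + (detm (m + 2) 0 (Function.update z 0 (sb (m + 2) j))
              + detm (m + 2) 1 (Function.update z 0 (sb (m + 2) j)))
            * (detm (m + 2) 0 (Function.update y 0 (sb (m + 2) 1))
                + detm (m + 2) 1 (Function.update y 0 (sb (m + 2) 1)))) * (if j = 1 then 1 else 0)
      by rw [C2_comp hμ (Function.update y 0 (sb (m + 2) 0)) j,
          C2_comp hμ (Function.update y 0 (sb (m + 2) 1)) j]; ring]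
  rw [sum_delta2, C2_T1 hμ y, C2_T1 hμ z, detm_u00 y, detm_u00 z, detm_u11 y, detm_u11 z,
    detm_swap y, detm_swap z]
  ring

end Aux4

section Aux5
variable {m : ℕ} {ν : AlternatingMap ℂ (nV (m + 2)) (nV (m + 2)) (Fin (m + 2))}

lemma nu_update (hν : IsC3 (m + 2) ν) (j : Fin (m + 3)) :
    ν (Function.update (bt (m + 2) 1) 0 (sb (m + 2) j)) =
      if j = 0 then sb (m + 2) 0 else if j = 1 then sb (m + 2) 1 else 0 := by
  by_cases h0 : j = 0
  · subst h0
    rw [if_pos rfl]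
    have hb : sb (m + 2) 0 = bt (m + 2) 1 0 := by
      simp only [bt, succAbove_one_zero]
    rw [hb, Function.update_eq_self]
    exact hν.1
  by_cases h1 : j = 1
  · subst h1
    rw [if_neg h0, if_pos rfl]
    have hb : Function.update (bt (m + 2) 1) 0 (sb (m + 2) 1) = bt (m + 2) 0 := by
      funext i
      rcases Fin.eq_zero_or_eq_succ i with rfl | ⟨k, rfl⟩
      · simp only [Function.update_self, bt, Fin.succAbove_zero, Fin.succ_zero_eq_one]
      · rw [Function.update_of_ne (Fin.succ_ne_zero k)]
        simp only [bt, Fin.succAbove_zero, succAbove_one_succ]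
    rw [hb]
    exact hν.2.1
  · rw [if_neg h0, if_neg h1]
    set i₀ : Fin (m + 2) := j.pred h0 with hi₀
    have hsucc : i₀.succ = j := Fin.succ_pred j h0
    have hi₀0 : i₀ ≠ 0 := by
      intro hc
      apply h1
      rw [← hsucc, hc, Fin.succ_zero_eq_one]
    apply ν.map_eq_zero_of_eq _ (show Function.update (bt (m + 2) 1) 0 (sb (m + 2) j) 0
        = Function.update (bt (m + 2) 1) 0 (sb (m + 2) j) i₀ from ?_) (Ne.symm hi₀0)
    rw [Function.update_self, Function.update_of_ne hi₀0]
    have : (1 : Fin (m + 3)).succAbove i₀ = j := by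
      rcases Fin.eq_zero_or_eq_succ i₀ with hc | ⟨k, hk⟩
      · exact absurd hc hi₀0
      · rw [hk, succAbove_one_succ, ← hk, hsucc]
    simp only [bt, this]

lemma nu_T1 (hν : IsC3 (m + 2) ν) : T1 m ⇑ν (bt (m + 2) 1) = 2 := by
  unfold T1
  rw [Finset.sum_congr rfl fun j _ => show ν (Function.update (bt (m + 2) 1) 0 (sb (m + 2) j)) j
      = 1 * (if j = 0 then 1 else 0) + 1 * (if j = 1 then 1 else 0) from ?_]
  · rw [sum_delta2]
    norm_num
  · rw [nu_update hν]
    by_cases h0 : j = 0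
    · subst h0; simp [sb_apply]
    by_cases h1 : j = 1
    · subst h1; simp [sb_apply]
    · simp [h0, h1]

lemma nu_T2 (hν : IsC3 (m + 2) ν) : T2 m ⇑ν (bt (m + 2) 1) (bt (m + 2) 1) = 2 := by
  unfold T2
  have key : ∀ j i : Fin (m + 3),
      ν (Function.update (bt (m + 2) 1) 0 (sb (m + 2) j)) i
        * ν (Function.update (bt (m + 2) 1) 0 (sb (m + 2) i)) j
      = (if j = 0 then 1 else 0) * (if i = 0 then 1 else 0)
        + (if j = 1 then 1 else 0) * (if i = 1 then 1 else 0) := by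
    intro j i
    rw [nu_update hν, nu_update hν]
    by_cases h0 : j = 0 <;> by_cases h1 : j = 1 <;>
      by_cases g0 : i = 0 <;> by_cases g1 : i = 1 <;>
      simp_all [sb_apply]
  rw [Finset.sum_congr rfl fun j _ => Finset.sum_congr rfl fun i _ => key j i]
  have inner : ∀ j : Fin (m + 3), ∑ i : Fin (m + 3),
      ((if j = 0 then (1:ℂ) else 0) * (if i = 0 then 1 else 0)
        + (if j = 1 then 1 else 0) * (if i = 1 then 1 else 0))
      = 1 * (if j = 0 then 1 else 0) + 1 * (if j = 1 then 1 else 0) := by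
    intro j
    rw [Finset.sum_add_distrib, ← Finset.mul_sum, ← Finset.mul_sum]
    simp only [Finset.sum_ite_eq', Finset.mem_univ, if_true]
    ring
  rw [Finset.sum_congr rfl fun j _ => inner j, sum_delta2]
  norm_num
end Aux5

/-- For every integer `n ≥ 2` and every `α ≠ -1/4`, the algebra `C₂(α)` does
not degenerate to `C₃`. -/
theorem C2_not_degenerates_to_C3 (n : ℕ) (hn : 2 ≤ n) (α : ℂ) (hα : α ≠ -(1 / 4))
    (μ ν : AlternatingMap ℂ (nV n) (nV n) (Fin n)) (hμ : IsC2 n α μ) (hν : IsC3 n ν) :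
    ⇑ν ∉ closure (glOrbit n ⇑μ) := by
  obtain ⟨m, rfl⟩ : ∃ m, n = m + 2 := ⟨n - 2, by omega⟩
  intro hmem
  have hcont1 : ∀ y : Fin (m + 2) → nV (m + 2),
      Continuous fun f : (Fin (m + 2) → nV (m + 2)) → nV (m + 2) => T1 m f y := by
    intro y
    unfold T1
    apply continuous_finset_sum
    intro j _
    exact (continuous_apply _).comp (continuous_apply _)
  have hcont2 : ∀ y z : Fin (m + 2) → nV (m + 2),
      Continuous fun f : (Fin (m + 2) → nV (m + 2)) → nV (m + 2) => T2 m f y z := by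
    intro y z
    unfold T2
    apply continuous_finset_sum
    intro j _
    apply continuous_finset_sum
    intro i _
    fun_prop
  set S : Set ((Fin (m + 2) → nV (m + 2)) → nV (m + 2)) :=
    {f | ∀ y z, T2 m f y z = (1 + 2 * α) * (T1 m f y * T1 m f z)} with hS
  have hclosed : IsClosed S := by
    have : S = ⋂ (y : Fin (m + 2) → nV (m + 2)), ⋂ (z : Fin (m + 2) → nV (m + 2)),
        {f | T2 m f y z = (1 + 2 * α) * (T1 m f y * T1 m f z)} := by
      ext f
      simp [hS, Set.mem_iInter]
    rw [this]
    exact isClosed_iInter fun y => isClosed_iInter fun z =>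
      isClosed_eq (hcont2 y z) (continuous_const.mul ((hcont1 y).mul (hcont1 z)))
  have horb : glOrbit (m + 2) ⇑μ ⊆ S := by
    rintro f ⟨g, rfl⟩ y z
    rw [T2_glAct, T1_glAct, T1_glAct]
    exact C2_T2 hμ _ _
  have hmemS : ⇑ν ∈ S := closure_minimal horb hclosed hmem
  have hval := hmemS (bt (m + 2) 1) (bt (m + 2) 1)
  rw [nu_T1 hν, nu_T2 hν] at hval
  apply hα
  linear_combination (-1 / 8 : ℂ) * hval
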